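/- Under the same hypotheses as the hyperbolized NLS semidiscretization (periodic upwind SBP operators with diagonal positive definite M, system v' = −D₋ω − β(v²+w²)⊙w, w' = D₋ν + β(v²+w²)⊙v, τν' = D₊w − ω, τω' = −D₊v + ν), the discrete energy E(t) = 2νᵀM D₊ v − νᵀMν + 2ωᵀM D₊ w − ωᵀMω − (β/2) 𝟙ᵀ M (v²+w²)² is constant in time. -/

import Mathlib

open Matrix Finset

lemma hasDerivAt_dot' {N : ℕ} {x y : ℝ → Fin N → ℝ} {x' y' : Fin N → ℝ} {t : ℝ}
    (hx : HasDerivAt x x' t) (hy : HasDerivAt y y' t) :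
    HasDerivAt (fun s => dotProduct (x s) (y s))
      (dotProduct x' (y t) + dotProduct (x t) y') t := by
  have h : HasDerivAt (fun s => ∑ i, x s i * y s i)
      (∑ i, (x' i * y t i + x t i * y' i)) t :=
    HasDerivAt.fun_sum fun i _ => (hasDerivAt_pi.mp hx i).mul (hasDerivAt_pi.mp hy i)
  simpa [dotProduct, Finset.sum_add_distrib] using h

lemma hasDerivAt_mulVec' {N : ℕ} (A : Matrix (Fin N) (Fin N) ℝ) {x : ℝ → Fin N → ℝ}
    {x' : Fin N → ℝ} {t : ℝ} (hx : HasDerivAt x x' t) :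
    HasDerivAt (fun s => A.mulVec (x s)) (A.mulVec x') t := by
  rw [hasDerivAt_pi]
  intro i
  have h : HasDerivAt (fun s => ∑ j, A i j * x s j) (∑ j, A i j * x' j) t :=
    HasDerivAt.fun_sum fun j _ => (hasDerivAt_pi.mp hx j).const_mul _
  simpa [Matrix.mulVec, dotProduct] using h

lemma hasDerivAt_g' {N : ℕ} {v w : ℝ → Fin N → ℝ} {vd wd : Fin N → ℝ} {t : ℝ}
    (hv : HasDerivAt v vd t) (hw : HasDerivAt w wd t) :
    HasDerivAt (fun s => fun i => (v s i ^ 2 + w s i ^ 2) ^ 2)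
      (fun i => 2 * (v t i ^ 2 + w t i ^ 2) * (2 * v t i * vd i + 2 * w t i * wd i)) t := by
  rw [hasDerivAt_pi]
  intro i
  have h := (((hasDerivAt_pi.mp hv i).pow 2).add ((hasDerivAt_pi.mp hw i).pow 2)).pow 2
  refine h.congr_deriv ?_
  push_cast
  simp only [Pi.add_apply, Pi.pow_apply]
  ring


/-- Semidiscrete energy conservation for the hyperbolized NLS semidiscretization
with periodic upwind SBP operators:
`E(t) = 2νᵀM D₊ v − νᵀMν + 2ωᵀM D₊ w − ωᵀMω − (β/2) 𝟙ᵀ M (v²+w²)²`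
is constant in time. -/
theorem hyperbolized_nls_energy_conservation (N : ℕ) (β τ : ℝ) (hτ : 0 < τ)
    (M Dp Dm : Matrix (Fin N) (Fin N) ℝ)
    (d : Fin N → ℝ) (hd : ∀ i, 0 < d i) (hM : M = Matrix.diagonal d)
    (hSBP : M * Dp + Dm.transpose * M = 0)
    (v w ν ω : ℝ → Fin N → ℝ)
    (hv : ∀ t : ℝ, HasDerivAt v
      (-(Dm.mulVec (ω t)) - fun i => β * (v t i ^ 2 + w t i ^ 2) * w t i) t)
    (hw : ∀ t : ℝ, HasDerivAt w
      (Dm.mulVec (ν t) + fun i => β * (v t i ^ 2 + w t i ^ 2) * v t i) t)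
    (hν : ∀ t : ℝ, HasDerivAt ν (τ⁻¹ • (Dp.mulVec (w t) - ω t)) t)
    (hω : ∀ t : ℝ, HasDerivAt ω (τ⁻¹ • (-(Dp.mulVec (v t)) + ν t)) t) :
    ∀ t₁ t₂ : ℝ,
      (2 * dotProduct (ν t₁) ((M * Dp).mulVec (v t₁))
        - dotProduct (ν t₁) (M.mulVec (ν t₁))
        + 2 * dotProduct (ω t₁) ((M * Dp).mulVec (w t₁))
        - dotProduct (ω t₁) (M.mulVec (ω t₁))
        - β / 2 * dotProduct (fun _ => (1 : ℝ))
            (M.mulVec fun i => (v t₁ i ^ 2 + w t₁ i ^ 2) ^ 2))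
      = (2 * dotProduct (ν t₂) ((M * Dp).mulVec (v t₂))
        - dotProduct (ν t₂) (M.mulVec (ν t₂))
        + 2 * dotProduct (ω t₂) ((M * Dp).mulVec (w t₂))
        - dotProduct (ω t₂) (M.mulVec (ω t₂))
        - β / 2 * dotProduct (fun _ => (1 : ℝ))
            (M.mulVec fun i => (v t₂ i ^ 2 + w t₂ i ^ 2) ^ 2)) := by
  have hMDp : ∀ x y : Fin N → ℝ,
      dotProduct x ((M * Dp).mulVec y) = -(dotProduct (Dm.mulVec x) (M.mulVec y)) := by
    intro x y
    have h : M * Dp = -(Dm.transpose * M) := eq_neg_of_add_eq_zero_left hSBP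
    rw [h, Matrix.neg_mulVec, dotProduct_neg, ← Matrix.mulVec_mulVec,
      dotProduct_mulVec, Matrix.vecMul_transpose]
  have hdiag : ∀ x y : Fin N → ℝ,
      dotProduct x (M.mulVec y) = ∑ i, x i * (d i * y i) := by
    intro x y
    simp [hM, dotProduct, Matrix.mulVec_diagonal]
  have key : ∀ t : ℝ, HasDerivAt (fun s : ℝ =>
      2 * dotProduct (ν s) ((M * Dp).mulVec (v s))
        - dotProduct (ν s) (M.mulVec (ν s))
        + 2 * dotProduct (ω s) ((M * Dp).mulVec (w s))
        - dotProduct (ω s) (M.mulVec (ω s))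
        - β / 2 * dotProduct (fun _ => (1 : ℝ))
            (M.mulVec fun i => (v s i ^ 2 + w s i ^ 2) ^ 2)) 0 t := by
    intro t
    have h1 := hasDerivAt_dot' (hν t) (hasDerivAt_mulVec' (M * Dp) (hv t))
    have h2 := hasDerivAt_dot' (hν t) (hasDerivAt_mulVec' M (hν t))
    have h3 := hasDerivAt_dot' (hω t) (hasDerivAt_mulVec' (M * Dp) (hw t))
    have h4 := hasDerivAt_dot' (hω t) (hasDerivAt_mulVec' M (hω t))
    have h5 := hasDerivAt_dot' (hasDerivAt_const t (fun _ => (1 : ℝ)))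
      (hasDerivAt_mulVec' M (hasDerivAt_g' (hv t) (hw t)))
    have hE := ((((h1.const_mul 2).sub h2).add (h3.const_mul 2)).sub h4).sub
      (h5.const_mul (β / 2))
    refine hE.congr_deriv (Eq.symm ?_)
    rw [hMDp (ν t), hMDp (ω t)]
    rw [← Matrix.mulVec_mulVec, ← Matrix.mulVec_mulVec]
    simp only [hdiag, zero_dotProduct, zero_add, Pi.zero_apply,
      Pi.smul_apply, Pi.sub_apply, Pi.add_apply, Pi.neg_apply, smul_eq_mul,
      Finset.mul_sum, neg_add_rev, ← Finset.sum_neg_distrib,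
      ← Finset.sum_add_distrib, ← Finset.sum_sub_distrib]
    symm
    refine Finset.sum_eq_zero fun i _ => by ring
  intro t₁ t₂
  exact is_const_of_deriv_eq_zero (fun x => (key x).differentiableAt)
    (fun x => (key x).deriv) t₁ t₂
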